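/- Assume Rosenlicht's theorem: if u^n = Q(u, u', u'', …) with Q a differential polynomial over a differential field K of total degree less than n has a solution representable by generalized quadratures over K, then it has a solution algebraic over K. Deduce: if the linear equation y^{(n)} + a_1 y^{(n-1)} + … + a_n y = 0 (a_i ∈ K) has a nonzero solution representable by generalized quadratures over K, then it has a solution of the form y_1 = exp(z) where z' is algebraic over K. -/

import Mathlib

open MvPolynomial

/-- One step of a tower of extensions by generalized quadratures inside an
ambient differential field `F`. -/
def GQStep {F : Type*} [Field F] (δ : Derivation ℤ F F) (E E' : Subfield F) : Prop :=
  (∀ x ∈ E', δ x ∈ E') ∧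
  ∃ t : F, (IsAlgebraic ↥E t ∨ δ t ∈ E ∨ ∃ f ∈ E, δ t = f * t) ∧
    E' = Subfield.closure (↑E ∪ {t})

/-- `z` is representable by generalized quadratures over `K`. -/
def RepGQ {F : Type*} [Field F] (δ : Derivation ℤ F F) (K : Subfield F) (z : F) : Prop :=
  ∃ (m : ℕ) (E : ℕ → Subfield F), E 0 = K ∧
    (∀ i < m, GQStep δ (E i) (E (i + 1))) ∧ z ∈ E m

/-- The linear differential operator `L(y) = y^{(n)} + a_1·y^{(n-1)} + … + a_n·y`. -/
noncomputable def Lop {F : Type*} [Field F] (δ : Derivation ℤ F F) (n : ℕ)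
    (a : ℕ → F) (y : F) : F :=
  δ^[n] y + ∑ i ∈ Finset.range n, a (i + 1) * δ^[n - (i + 1)] y

noncomputable def dd : Derivation ℤ (MvPolynomial ℕ ℤ) (MvPolynomial ℕ ℤ) :=
  MvPolynomial.mkDerivation ℤ (fun i => X (i+1))

noncomputable def Dpoly : ℕ → MvPolynomial ℕ ℤ
  | 0 => 1
  | k+1 => dd (Dpoly k) + X 0 * Dpoly k

section Aux

variable {F : Type*} [Field F]

lemma chain (δ : Derivation ℤ F F) (u : F) (P : MvPolynomial ℕ ℤ) :
    δ (aeval (fun i => δ^[i] u) P) = aeval (fun i => δ^[i] u) (dd P) := by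
  induction P using MvPolynomial.induction_on with
  | C c => simp [dd, aeval_C]
  | add p q hp hq => simp [map_add, hp, hq]
  | mul_X p i hp =>
      rw [map_mul, Derivation.leibniz, smul_eq_mul, smul_eq_mul, hp, Derivation.leibniz,
        smul_eq_mul, smul_eq_mul, map_add, map_mul, map_mul]
      simp only [aeval_X, dd, MvPolynomial.mkDerivation_X]
      rw [← Function.iterate_succ_apply' δ i u]

lemma Dpoly_eval (δ : Derivation ℤ F F) {u y : F} (h : δ y = u * y) (k : ℕ) :
    δ^[k] y = aeval (fun i => δ^[i] u) (Dpoly k) * y := by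
  induction k with
  | zero => simp [Dpoly]
  | succ k ih =>
    rw [Function.iterate_succ_apply', ih, Derivation.leibniz, smul_eq_mul, smul_eq_mul, h,
      chain δ u]
    simp only [Dpoly, map_add, map_mul, aeval_X, Function.iterate_zero_apply]
    ring

lemma td_dd_monomial (s : ℕ →₀ ℕ) (c : ℤ) :
    (dd (monomial s c)).totalDegree ≤ s.sum fun _ e => e := by
  rw [dd, MvPolynomial.mkDerivation_monomial]
  rw [smul_eq_C_mul]
  refine (totalDegree_mul _ _).trans ?_
  rw [totalDegree_C, zero_add, Finsupp.sum]
  refine totalDegree_finsetSum_le fun i hi => ?_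
  rw [smul_eq_mul]
  refine (totalDegree_mul _ _).trans ?_
  have h2 : (monomial (s - Finsupp.single i 1) ((s i : ℤ))).totalDegree
      ≤ (s - Finsupp.single i 1).sum fun _ e => e := by
    exact totalDegree_monomial_le (s - Finsupp.single i 1) ((s i : ℤ))
  have h3 : (X (R := ℤ) (i+1) : MvPolynomial ℕ ℤ).totalDegree ≤ 1 := by
    rw [totalDegree_X]
  have h4 : ((s - Finsupp.single i 1).sum fun _ e => e) + 1 = s.sum fun _ e => e := by
    have hle : Finsupp.single i 1 ≤ s := by
      rw [Finsupp.single_le_iff, Nat.succ_le_iff, pos_iff_ne_zero, ← Finsupp.mem_support_iff]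
      exact hi
    have := tsub_add_cancel_of_le hle
    calc ((s - Finsupp.single i 1).sum fun _ e => e) + 1
        = ((s - Finsupp.single i 1).sum fun _ e => e) +
            ((Finsupp.single i 1).sum fun _ e => e) := by simp
      _ = ((s - Finsupp.single i 1) + Finsupp.single i 1).sum fun _ e => e := by
          rw [Finsupp.sum_add_index (by simp) (by simp)]
      _ = s.sum fun _ e => e := by rw [this]
  omega

lemma td_dd (P : MvPolynomial ℕ ℤ) : (dd P).totalDegree ≤ P.totalDegree := by
  conv_lhs => rw [P.as_sum]
  rw [map_sum]
  refine totalDegree_finsetSum_le fun s hs => ?_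
  exact (td_dd_monomial s _).trans (le_totalDegree hs)

lemma td_Dpoly (k : ℕ) : (Dpoly k).totalDegree ≤ k := by
  induction k with
  | zero => simp [Dpoly]
  | succ k ih =>
    rw [Dpoly]
    refine (totalDegree_add _ _).trans (max_le ?_ ?_)
    · exact ((td_dd _).trans ih).trans (Nat.le_succ k)
    · refine (totalDegree_mul _ _).trans ?_
      rw [totalDegree_X]
      omega

lemma td_Dpoly_sub : ∀ k, 1 ≤ k → (Dpoly k - X 0 ^ k).totalDegree < k
  | 1, _ => by
      have : Dpoly 1 - X 0 ^ 1 = 0 := by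
        simp [Dpoly, map_one]
      rw [this, totalDegree_zero]; omega
  | (k+2), _ => by
      have hk : 1 ≤ k + 1 := by omega
      have ih := td_Dpoly_sub (k+1) hk
      have heq : Dpoly (k+2) - X 0 ^ (k+2) =
          dd (Dpoly (k+1)) + X 0 * (Dpoly (k+1) - X 0 ^ (k+1)) := by
        rw [Dpoly]; ring
      rw [heq]
      refine lt_of_le_of_lt (totalDegree_add _ _) ?_
      rw [max_lt_iff]
      constructor
      · exact lt_of_le_of_lt ((td_dd _).trans (td_Dpoly _)) (by omega)
      · refine lt_of_le_of_lt (totalDegree_mul _ _) ?_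
        rw [totalDegree_X]
        omega

lemma td_map_le {R S : Type*} [CommSemiring R] [CommSemiring S] (f : R →+* S)
    (p : MvPolynomial ℕ R) : (map f p).totalDegree ≤ p.totalDegree := by
  rw [totalDegree, totalDegree]
  exact Finset.sup_mono (support_map_subset f p)

lemma Lop_eq (δ : Derivation ℤ F F) (n : ℕ) (a : ℕ → F) {u y : F} (h : δ y = u * y) :
    Lop δ n a y =
      (aeval (fun i => δ^[i] u) (Dpoly n) +
        ∑ i ∈ Finset.range n, a (i+1) * aeval (fun i => δ^[i] u) (Dpoly (n - (i+1)))) * y := by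
  rw [Lop, add_mul, Finset.sum_mul]
  congr 1
  · exact Dpoly_eval δ h n
  · exact Finset.sum_congr rfl fun i _ => by rw [Dpoly_eval δ h, mul_assoc]

end Aux

/-- Assume Rosenlicht's theorem (`hRos`): if `u^N = Q(u, u', …)` with
`deg Q < N` over `K` has a solution representable by generalized quadratures
over `K`, then it has a solution algebraic over `K`. Then if the linear equation
`y^{(n)} + a_1 y^{(n-1)} + … + a_n y = 0` (`a_i ∈ K`) has a nonzero solution
representable by generalized quadratures over `K`, it has a solution of the form
`y₁ = exp(z)` with `z'` algebraic over `K`, i.e. a nonzero solution `y₁` with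
`y₁' = g·y₁` for some `g` algebraic over `K`. (`hexp` guarantees the ambient
field `F` contains exponentials of integrals.) -/
theorem statement19 {F : Type*} [Field F] [Algebra ℂ F] (δ : Derivation ℤ F F)
    (K : Subfield F) (hK : ∀ x ∈ K, δ x ∈ K)
    (hconst : ∀ x : F, δ x = 0 ↔ ∃ c : ℂ, x = algebraMap ℂ F c)
    (hexp : ∀ g : F, ∃ w : F, w ≠ 0 ∧ δ w = g * w)
    (hRos : ∀ N : ℕ, 0 < N → ∀ Q : MvPolynomial ℕ ↥K, Q.totalDegree < N →
      (∃ u : F, RepGQ δ K u ∧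
        u ^ N = MvPolynomial.aeval (fun i => δ^[i] u) Q) →
      ∃ w : F, IsAlgebraic ↥K w ∧
        w ^ N = MvPolynomial.aeval (fun i => δ^[i] w) Q)
    (n : ℕ) (hn : 0 < n) (a : ℕ → F) (ha : ∀ i, a i ∈ K)
    (y : F) (hy : y ≠ 0) (hsol : Lop δ n a y = 0) (hrep : RepGQ δ K y) :
    ∃ y₁ : F, y₁ ≠ 0 ∧ Lop δ n a y₁ = 0 ∧
      ∃ g : F, IsAlgebraic ↥K g ∧ δ y₁ = g * y₁ := by
  classical
  -- the Riccati polynomial over K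
  set Q : MvPolynomial ℕ ↥K :=
    X 0 ^ n - map (algebraMap ℤ ↥K) (Dpoly n)
      - ∑ i ∈ Finset.range n,
          C (⟨a (i+1), ha (i+1)⟩ : ↥K) * map (algebraMap ℤ ↥K) (Dpoly (n-(i+1))) with hQ
  -- evaluation of Q
  have haQ : ∀ u : F, aeval (fun i => δ^[i] u) Q =
      u ^ n - (aeval (fun i => δ^[i] u) (Dpoly n) +
        ∑ i ∈ Finset.range n, a (i+1) * aeval (fun i => δ^[i] u) (Dpoly (n - (i+1)))) := by
    intro u
    rw [hQ]
    rw [map_sub, map_sub, map_pow, aeval_X, Function.iterate_zero_apply,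
      aeval_map_algebraMap, map_sum]
    rw [sub_sub]
    congr 2
    refine Finset.sum_congr rfl fun i _ => ?_
    rw [map_mul, aeval_C, aeval_map_algebraMap]
    rfl
  -- degree of Q
  have hQdeg : Q.totalDegree < n := by
    have h1 : Q = -((map (algebraMap ℤ ↥K) (Dpoly n - X 0 ^ n)) +
        ∑ i ∈ Finset.range n,
          C (⟨a (i+1), ha (i+1)⟩ : ↥K) * map (algebraMap ℤ ↥K) (Dpoly (n-(i+1)))) := by
      rw [hQ, map_sub, map_pow, map_X]
      ring
    rw [h1, totalDegree_neg]
    refine lt_of_le_of_lt (totalDegree_add _ _) ?_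
    rw [max_lt_iff]
    constructor
    · exact lt_of_le_of_lt (td_map_le _ _) (td_Dpoly_sub n hn)
    · refine lt_of_le_of_lt (totalDegree_finsetSum_le (d := n - 1) fun i hi => ?_) (by omega)
      refine (totalDegree_mul _ _).trans ?_
      rw [totalDegree_C, zero_add]
      refine ((td_map_le _ _).trans (td_Dpoly _)).trans ?_
      have := Finset.mem_range.mp hi
      omega
  -- u := y'/y
  obtain ⟨m, E, hE0, hstep, hyE⟩ := hrep
  have hclosed : ∀ x ∈ E m, δ x ∈ E m := by
    cases m with
    | zero => rw [hE0]; exact hK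
    | succ m' => exact (hstep m' (Nat.lt_succ_self m')).1
  set u : F := δ y * y⁻¹ with hu_def
  have hu : δ y = u * y := by
    rw [hu_def, mul_assoc, inv_mul_cancel₀ hy, mul_one]
  have hrepu : RepGQ δ K u :=
    ⟨m, E, hE0, hstep, mul_mem (hclosed y hyE) (inv_mem hyE)⟩
  -- u satisfies the Riccati equation
  have hLu : aeval (fun i => δ^[i] u) (Dpoly n) +
      ∑ i ∈ Finset.range n, a (i+1) * aeval (fun i => δ^[i] u) (Dpoly (n - (i+1))) = 0 := by
    have := hsol
    rw [Lop_eq δ n a hu] at this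
    exact (mul_eq_zero.mp this).resolve_right hy
  have hric : u ^ n = aeval (fun i => δ^[i] u) Q := by
    rw [haQ u, hLu, sub_zero]
  -- apply Rosenlicht
  obtain ⟨w, halg, hw⟩ := hRos n hn Q hQdeg ⟨u, hrepu, hric⟩
  have hLw : aeval (fun i => δ^[i] w) (Dpoly n) +
      ∑ i ∈ Finset.range n, a (i+1) * aeval (fun i => δ^[i] w) (Dpoly (n - (i+1))) = 0 := by
    rw [haQ w] at hw
    linear_combination hw
  obtain ⟨y₁, hy₁ne, hy₁⟩ := hexp w
  exact ⟨y₁, hy₁ne, by rw [Lop_eq δ n a hy₁, hLw, zero_mul], w, halg, hy₁⟩
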